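/- Under the Case-C1 setup, the removal of the pair {v_2, v_4} disconnects d_1 from both sources; that is, every path from s_1 to d_1 and every path from s_2 to d_1 contains v_2 or v_4. -/

import Mathlib

open List

/-- `IsPath E p u w` : the nonempty list `p` of vertices is a directed path
from `u` to `w` with respect to the edge relation `E`. -/
def IsPath {V : Type*} (E : V → V → Prop) (p : List V) (u w : V) : Prop :=
  p ≠ [] ∧ p.head? = some u ∧ p.getLast? = some w ∧ p.Chain' E

/-- `Reaches E u w` (written `u ~> w`) : there is a directed path from `u` to `w`. -/
def Reaches {V : Type*} (E : V → V → Prop) (u w : V) : Prop :=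
  ∃ p, IsPath E p u w

/-- A two-unicast layered network: a finite directed graph, with two sources
`s1, s2` and two destinations `d1, d2` (all four distinct), vertices partitioned
into layers `1, ..., r` such that every edge goes from a layer to the next one,
the first layer is `{s1, s2}`, the last layer is `{d1, d2}`, and each source
reaches its corresponding destination. -/
structure TwoUnicastNetwork (V : Type*) [Fintype V] where
  E : V → V → Prop
  s1 : V
  s2 : V
  d1 : V
  d2 : V
  r : ℕ
  layer : V → ℕ
  layer_pos : ∀ v, 1 ≤ layer v
  layer_le : ∀ v, layer v ≤ r
  edge_layer : ∀ u w, E u w → layer w = layer u + 1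
  s_ne : s1 ≠ s2
  d_ne : d1 ≠ d2
  sd_ne : ∀ s d, (s = s1 ∨ s = s2) → (d = d1 ∨ d = d2) → s ≠ d
  first_layer : ∀ v, layer v = 1 ↔ v = s1 ∨ v = s2
  last_layer : ∀ v, layer v = r ↔ v = d1 ∨ v = d2
  conn1 : Reaches E s1 d1
  conn2 : Reaches E s2 d2

/-- `InterferesOn N S Ri srcOther v` : within the induced subgraph `G[S]`, the
node `v` causes interference on the path `Ri` : `v ∈ S`, `v ∉ Ri`, there is an
edge (inside `G[S]`) from `v` into a node of `Ri`, and there is a path from the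
other source `srcOther` to `v` lying inside `G[S]` and disjoint from `Ri`. -/
def InterferesOn {V : Type*} [Fintype V] (N : TwoUnicastNetwork V) (S : Set V)
    (Ri : List V) (srcOther : V) (v : V) : Prop :=
  v ∈ S ∧ v ∉ Ri ∧ (∃ w ∈ Ri, w ∈ S ∧ N.E v w) ∧
    ∃ q, IsPath N.E q srcOther v ∧ (∀ x ∈ q, x ∈ S) ∧ ∀ x ∈ q, x ∉ Ri

/-- `n_i(G[S])` : the number of nodes causing interference on `Ri` within the
induced subgraph `G[S]`, the interfering path coming from `srcOther`. -/
noncomputable def nInterf {V : Type*} [Fintype V] (N : TwoUnicastNetwork V)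
    (S : Set V) (Ri : List V) (srcOther : V) : ℕ :=
  {v | InterferesOn N S Ri srcOther v}.ncard

/-- `n_i^D` : the number of nodes of the other path `Rother` causing (direct)
interference on `Ri` in `G`. -/
noncomputable def nDirect {V : Type*} [Fintype V] (N : TwoUnicastNetwork V)
    (Ri Rother : List V) (srcOther : V) : ℕ :=
  {v | InterferesOn N Set.univ Ri srcOther v ∧ v ∈ Rother}.ncard

/-- The pair `(R1, R2)` (paths `s1 → d1` and `s2 → d2`) has manageable
interference: there is `S ⊇ R1 ∪ R2` with `n_1(G[S]) ≠ 1` and `n_2(G[S]) ≠ 1`. -/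
def Manageable {V : Type*} [Fintype V] (N : TwoUnicastNetwork V)
    (R1 R2 : List V) : Prop :=
  ∃ S : Set V, (∀ x ∈ R1, x ∈ S) ∧ (∀ x ∈ R2, x ∈ S) ∧
    nInterf N S R1 N.s2 ≠ 1 ∧ nInterf N S R2 N.s1 ≠ 1

/-- The pair `(R1, R2)` has `(s1,d1)`-manageable interference. -/
def Manageable1 {V : Type*} [Fintype V] (N : TwoUnicastNetwork V)
    (R1 R2 : List V) : Prop :=
  ∃ S : Set V, (∀ x ∈ R1, x ∈ S) ∧ (∀ x ∈ R2, x ∈ S) ∧ nInterf N S R1 N.s2 ≠ 1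

/-- The pair `(R1, R2)` has `(s2,d2)`-manageable interference. -/
def Manageable2 {V : Type*} [Fintype V] (N : TwoUnicastNetwork V)
    (R1 R2 : List V) : Prop :=
  ∃ S : Set V, (∀ x ∈ R1, x ∈ S) ∧ (∀ x ∈ R2, x ∈ S) ∧ nInterf N S R2 N.s1 ≠ 1

/-- Removal of the vertex `v` disconnects `a` from `b` :
every path from `a` to `b` contains `v`. -/
def CutVert {V : Type*} [Fintype V] (N : TwoUnicastNetwork V) (v a b : V) : Prop :=
  ∀ p, IsPath N.E p a b → v ∈ p


namespace Aux
variable {V : Type*} {E : V → V → Prop}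

lemma isPath_single (a : V) : IsPath E [a] a a :=
  ⟨by simp, rfl, rfl, List.isChain_singleton a⟩

lemma head_mem {p : List V} {a b : V} (h : IsPath E p a b) : a ∈ p := by
  obtain ⟨hne, hh, -, -⟩ := h
  cases p with
  | nil => exact absurd rfl hne
  | cons x xs => simp at hh; simp [hh]

lemma last_mem {p : List V} {a b : V} (h : IsPath E p a b) : b ∈ p := by
  obtain ⟨hne, -, hl, -⟩ := h
  have := List.getLast?_eq_getLast hne
  rw [this] at hl
  have : b = p.getLast hne := by simpa using hl.symm
  exact this ▸ List.getLast_mem hne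

lemma isPath_cons {a c b : V} {p : List V} (h : IsPath E p c b) (hac : E a c) :
    IsPath E (a :: p) a b := by
  obtain ⟨hne, hh, hl, hchain⟩ := h
  refine ⟨by simp, rfl, ?_, ?_⟩
  · cases p with
    | nil => exact absurd rfl hne
    | cons x xs => simpa using hl
  · rw [List.Chain', List.isChain_cons]
    exact ⟨fun y hy => by rw [hh] at hy; simp at hy; exact hy ▸ hac, hchain⟩

lemma concatPath {q q' : List V} {a z t b : V} (h1 : IsPath E q a z) (hE : E z t)
    (h2 : IsPath E q' t b) : IsPath E (q ++ q') a b := by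
  obtain ⟨hne1, hh1, hl1, hc1⟩ := h1
  obtain ⟨hne2, hh2, hl2, hc2⟩ := h2
  refine ⟨by simp [hne1], ?_, ?_, ?_⟩
  · rw [List.head?_append_of_ne_nil _ hne1]; exact hh1
  · rw [List.getLast?_append]
    rw [hl2]; rfl
  · rw [List.Chain', List.isChain_append]
    refine ⟨hc1, hc2, fun x hx y hy => ?_⟩
    rw [hl1] at hx; rw [hh2] at hy
    simp at hx hy; subst hx; subst hy; exact hE

lemma firstCross (T : V → Prop) (p : List V) :
    ∀ (a b : V), IsPath E p a b → ¬ T a → (∃ x ∈ p, T x) →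
    ∃ q z t, IsPath E q a z ∧ E z t ∧ T t ∧ t ∈ p ∧ z ∈ q ∧
      (∀ x ∈ q, ¬ T x) ∧ (∀ x ∈ q, x ∈ p) := by
  induction p with
  | nil => intro a b h; exact absurd rfl h.1
  | cons x p ih =>
    intro a b h hTa hex
    obtain ⟨-, hhead, hlast, hchain⟩ := h
    have hax : a = x := (show x = a by simpa using hhead).symm
    subst hax
    cases p with
    | nil =>
      obtain ⟨y, hy, hTy⟩ := hex
      simp at hy
      exact absurd (hy ▸ hTy) hTa
    | cons c p' =>
      rw [List.Chain', List.isChain_cons_cons] at hchain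
      have hpath : IsPath E (c :: p') c b :=
        ⟨by simp, rfl, by simpa using hlast, hchain.2⟩
      by_cases hTc : T c
      · exact ⟨[a], a, c, isPath_single a, hchain.1, hTc, by simp, by simp,
          by simpa using hTa, by simp⟩
      · have hex' : ∃ y ∈ c :: p', T y := by
          obtain ⟨y, hy, hTy⟩ := hex
          rcases List.mem_cons.mp hy with rfl | hy
          · exact absurd hTy hTa
          · exact ⟨y, hy, hTy⟩
        obtain ⟨q, z, t, hq, hzt, hTt, htp, hzq, hqT, hqp⟩ := ih c b hpath hTc hex'
        refine ⟨a :: q, z, t, ?_, hzt, hTt, List.mem_cons_of_mem _ htp,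
          List.mem_cons_of_mem _ hzq, ?_, ?_⟩
        · have hqc : q.head? = some c := hq.2.1
          have : IsPath E q c z := hq
          exact isPath_cons this (by
            cases q with
            | nil => exact absurd rfl this.1
            | cons w ws => simp at hqc; exact hqc ▸ hchain.1)
        · intro y hy
          rcases List.mem_cons.mp hy with rfl | hy
          · exact hTa
          · exact hqT y hy
        · intro y hy
          rcases List.mem_cons.mp hy with rfl | hy
          · simp
          · exact List.mem_cons_of_mem _ (hqp y hy)

lemma reachTo (p : List V) :
    ∀ (a b : V), IsPath E p a b → ∀ c ∈ p, ∃ q, IsPath E q a c ∧ ∀ x ∈ q, x ∈ p := by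
  induction p with
  | nil => intro a b h; exact absurd rfl h.1
  | cons x p ih =>
    intro a b h c hc
    obtain ⟨-, hhead, hlast, hchain⟩ := h
    have hax : a = x := (show x = a by simpa using hhead).symm
    subst hax
    rcases List.mem_cons.mp hc with rfl | hc
    · exact ⟨[c], isPath_single c, by simp⟩
    · cases p with
      | nil => simp at hc
      | cons d p' =>
        rw [List.Chain', List.isChain_cons_cons] at hchain
        have hpath : IsPath E (d :: p') d b :=
          ⟨by simp, rfl, by simpa using hlast, hchain.2⟩
        obtain ⟨q, hq, hqsub⟩ := ih d b hpath c hc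
        refine ⟨a :: q, ?_, ?_⟩
        · have hqd : q.head? = some d := hq.2.1
          exact isPath_cons hq (by
            cases q with
            | nil => exact absurd rfl hq.1
            | cons w ws => simp at hqd; exact hqd ▸ hchain.1)
        · intro y hy
          rcases List.mem_cons.mp hy with rfl | hy
          · simp
          · exact List.mem_cons_of_mem _ (hqsub y hy)

lemma suffixFrom (p : List V) :
    ∀ (a b : V), IsPath E p a b → ∀ c ∈ p, ∃ q, IsPath E q c b ∧ ∀ x ∈ q, x ∈ p := by
  induction p with
  | nil => intro a b h; exact absurd rfl h.1
  | cons x p ih =>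
    intro a b h c hc
    obtain ⟨-, hhead, hlast, hchain⟩ := h
    have hax : a = x := (show x = a by simpa using hhead).symm
    subst hax
    rcases List.mem_cons.mp hc with rfl | hc
    · exact ⟨c :: p, ⟨by simp, rfl, hlast, hchain⟩, fun y hy => hy⟩
    · cases p with
      | nil => simp at hc
      | cons d p' =>
        rw [List.Chain', List.isChain_cons_cons] at hchain
        have hpath : IsPath E (d :: p') d b :=
          ⟨by simp, rfl, by simpa using hlast, hchain.2⟩
        obtain ⟨q, hq, hqsub⟩ := ih d b hpath c hc
        exact ⟨q, hq, fun y hy => List.mem_cons_of_mem _ (hqsub y hy)⟩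

end Aux

theorem statement8 {V : Type*} [Fintype V] [DecidableEq V]
    (N : TwoUnicastNetwork V)
    (P11 P22 Ps2v1 Pvmv1 Ps1v2 : List V)
    (v0 v1 v2 v3 v4 v5 v6 vm : V)
    (hP11 : IsPath N.E P11 N.s1 N.d1)
    (hP22 : IsPath N.E P22 N.s2 N.d2)
    (hdisj : P11.Disjoint P22)
    (hNoMan : ∀ R1 R2 : List V, IsPath N.E R1 N.s1 N.d1 → IsPath N.E R2 N.s2 N.d2 →
      R1.Disjoint R2 → ¬ Manageable N R1 R2)
    (hn1 : 2 ≤ nInterf N Set.univ P11 N.s2)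
    (hn1D : nDirect N P11 P22 N.s2 = 1)
    (hn2 : nInterf N Set.univ P22 N.s1 = 1)
    (hn2D : nDirect N P22 P11 N.s1 = 0)
    (hv3P22 : v3 ∈ P22)
    (hv3unique : {v | InterferesOn N Set.univ P11 N.s2 v ∧ v ∈ P22} = {v3})
    (hv4P11 : v4 ∈ P11)
    (hv3v4 : N.E v3 v4)
    (hv3v4unique : ∀ w ∈ P11, N.E v3 w → w = v4)
    (hv1P11 : v1 ∉ P11)
    (hv1P22 : v1 ∉ P22)
    (hv1int : InterferesOn N Set.univ P11 N.s2 v1)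
    (hPs2v1 : IsPath N.E Ps2v1 N.s2 v1)
    (hPs2v1disj : Ps2v1.Disjoint P11)
    (hvmP22 : vm ∈ P22)
    (hvmPs2v1 : vm ∈ Ps2v1)
    (hvmlast : ∀ x ∈ Ps2v1, x ∈ P22 → Ps2v1.idxOf x ≤ Ps2v1.idxOf vm)
    (hPvmv1 : IsPath N.E Pvmv1 vm v1)
    (hPvmv1suffix : Pvmv1 <:+ Ps2v1)
    (hv2Pvmv1 : v2 ∈ Pvmv1)
    (hv2ne : v2 ≠ vm)
    (hv2unique : {v | InterferesOn N Set.univ P22 N.s1 v} = {v2})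
    (hv0P22 : v0 ∈ P22)
    (hv2v0 : N.E v2 v0)
    (hv2v0unique : ∀ w ∈ P22, N.E v2 w → w = v0)
    (hPs1v2 : IsPath N.E Ps1v2 N.s1 v2)
    (hPs1v2sub : ∀ x ∈ Ps1v2, x ∈ P11 ∨ x ∈ P22 ∨ x ∈ Pvmv1)
    (hv5P11 : v5 ∈ P11)
    (hv5mem : v5 ∈ Ps1v2)
    (hv5last : ∀ x ∈ Ps1v2, x ∈ P11 → Ps1v2.idxOf x ≤ Ps1v2.idxOf v5)
    (hv6succ : ∃ k : ℕ, Ps1v2[k]? = some v5 ∧ Ps1v2[k+1]? = some v6) :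
    (∀ p : List V, IsPath N.E p N.s1 N.d1 → v2 ∈ p ∨ v4 ∈ p) ∧
    (∀ p : List V, IsPath N.E p N.s2 N.d1 → v2 ∈ p ∨ v4 ∈ p) := by

  classical
  obtain ⟨q3, hq3, hq3sub⟩ := Aux.reachTo P22 N.s2 N.d2 hP22 v3 hv3P22
  have hs1P11 : N.s1 ∈ P11 := Aux.head_mem hP11
  have hd1P11 : N.d1 ∈ P11 := Aux.last_mem hP11
  have hs2P22 : N.s2 ∈ P22 := Aux.head_mem hP22
  have hv2mem : InterferesOn N Set.univ P22 N.s1 v2 := by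
    have : v2 ∈ ({v | InterferesOn N Set.univ P22 N.s1 v} : Set V) := by
      rw [hv2unique]; exact Set.mem_singleton v2
    exact this
  have hv2nP22 : v2 ∉ P22 := hv2mem.2.1
  have hv2nP11 : v2 ∉ P11 := fun h => hPs2v1disj (hPvmv1suffix.subset hv2Pvmv1) h
  have hv3nP11 : v3 ∉ P11 := fun h => hdisj h hv3P22
  have huniq2 : ∀ v, InterferesOn N Set.univ P22 N.s1 v → v = v2 := by
    intro v hv
    have : v ∈ ({v2} : Set V) := hv2unique ▸ hv
    simpa using this
  have hmono : ∀ (S S' : Set V) (Ri : List V) (src v : V), S ⊆ S' →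
      InterferesOn N S Ri src v → InterferesOn N S' Ri src v := by
    rintro S S' Ri src v hSS ⟨h1, h2, ⟨w, hw, hwS, hE⟩, q, hq, hqS, hqR⟩
    exact ⟨hSS h1, h2, ⟨w, hw, hSS hwS, hE⟩, q, hq, fun x hx => hSS (hqS x hx), hqR⟩
  have key2 : ∀ S : Set V, v2 ∉ S → nInterf N S P22 N.s1 ≠ 1 := by
    intro S hv2S h1
    obtain ⟨c, hc⟩ := Set.ncard_eq_one.mp h1
    have hcmem : InterferesOn N S P22 N.s1 c := by
      have : c ∈ ({v | InterferesOn N S P22 N.s1 v} : Set V) := by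
        rw [hc]; exact Set.mem_singleton c
      exact this
    have hcv2 := huniq2 c (hmono S Set.univ _ _ _ (Set.subset_univ S) hcmem)
    exact hv2S (hcv2 ▸ hcmem.1)
  have htwo : ∀ (s : Set V) (a b : V), a ∈ s → b ∈ s → a ≠ b → s.ncard ≠ 1 := by
    intro s a b ha hb hab h
    obtain ⟨c, rfl⟩ := Set.ncard_eq_one.mp h
    simp only [Set.mem_singleton_iff] at ha hb
    exact hab (ha.trans hb.symm)
  constructor
  · -- paths from s1 to d1
    intro p hp
    by_contra hcon
    push_neg at hcon
    obtain ⟨hv2p, hv4p⟩ := hcon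
    have hd1p : N.d1 ∈ p := Aux.last_mem hp
    have hs1nP22 : N.s2 ∈ P22 := hs2P22
    have hs1n22 : N.s1 ∉ P22 := fun h => hdisj hs1P11 h
    have hpdisj : p.Disjoint P22 := by
      intro a hap ha22
      obtain ⟨q, z, t, hq, hzt, hTt, htp, hzq, hqT, hqp⟩ :=
        Aux.firstCross (· ∈ P22) p N.s1 N.d1 hp hs1n22 ⟨a, hap, ha22⟩
      have hz : InterferesOn N Set.univ P22 N.s1 z :=
        ⟨trivial, hqT z hzq, ⟨t, hTt, trivial, hzt⟩, q, hq, fun _ _ => trivial, hqT⟩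
      exact hv2p (huniq2 z hz ▸ hqp z hzq)
    have hn2S0 : nInterf N {x | x ∈ p ∨ x ∈ P22} P22 N.s1 ≠ 1 := by
      refine key2 _ ?_
      intro h
      simp only [Set.mem_setOf_eq] at h
      rcases h with h | h
      · exact hv2p h
      · exact hv2nP22 h
    have hn1S0 : nInterf N {x | x ∈ p ∨ x ∈ P22} p N.s2 = 1 := by
      by_contra hne
      exact hNoMan p P22 hp hP22 hpdisj
        ⟨{x | x ∈ p ∨ x ∈ P22}, fun x hx => Or.inl hx, fun x hx => Or.inr hx, hne, hn2S0⟩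
    rw [nInterf] at hn1S0
    obtain ⟨u, hu⟩ := Set.ncard_eq_one.mp hn1S0
    have humem : InterferesOn N {x | x ∈ p ∨ x ∈ P22} p N.s2 u := by
      have : u ∈ ({v | InterferesOn N {x | x ∈ p ∨ x ∈ P22} p N.s2 v} : Set V) := by
        rw [hu]; exact Set.mem_singleton u
      exact this
    have hunp : u ∉ p := humem.2.1
    have huP22 : u ∈ P22 := by
      have h1 := humem.1
      simp only [Set.mem_setOf_eq] at h1
      tauto
    obtain ⟨q4, hq4, hq4sub⟩ := Aux.suffixFrom P11 N.s1 N.d1 hP11 v4 hv4P11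
    have hd1q4 : N.d1 ∈ q4 := Aux.last_mem hq4
    obtain ⟨q', x, y, hq', hxy, hyp, hyq4, hxq', hq'T, hq'sub⟩ :=
      Aux.firstCross (· ∈ p) q4 v4 N.d1 hq4 hv4p ⟨N.d1, hd1q4, hd1p⟩
    have hxP11 : x ∈ P11 := hq4sub x (hq'sub x hxq')
    have hxint : InterferesOn N {w | w ∈ p ∨ w ∈ P22 ∨ w ∈ P11} p N.s2 x := by
      refine ⟨Or.inr (Or.inr hxP11), hq'T x hxq', ⟨y, hyp, Or.inl hyp, hxy⟩,
        q3 ++ q', Aux.concatPath hq3 hv3v4 hq', ?_, ?_⟩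
      · intro w hw
        rcases List.mem_append.mp hw with hw | hw
        · exact Or.inr (Or.inl (hq3sub w hw))
        · exact Or.inr (Or.inr (hq4sub w (hq'sub w hw)))
      · intro w hw
        rcases List.mem_append.mp hw with hw | hw
        · exact fun hwp => hpdisj hwp (hq3sub w hw)
        · exact hq'T w hw
    have huint : InterferesOn N {w | w ∈ p ∨ w ∈ P22 ∨ w ∈ P11} p N.s2 u := by
      refine hmono {x | x ∈ p ∨ x ∈ P22} _ _ _ _ ?_ humem
      intro w hw
      simp only [Set.mem_setOf_eq] at hw ⊢
      tauto
    have hux : u ≠ x := fun h => hdisj hxP11 (h ▸ huP22)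
    refine hNoMan p P22 hp hP22 hpdisj
      ⟨{w | w ∈ p ∨ w ∈ P22 ∨ w ∈ P11}, fun w hw => Or.inl hw,
        fun w hw => Or.inr (Or.inl hw), htwo _ u x huint hxint hux, ?_⟩
    refine key2 _ ?_
    intro h
    simp only [Set.mem_setOf_eq] at h
    rcases h with h | h | h
    · exact hv2p h
    · exact hv2nP22 h
    · exact hv2nP11 h
  · -- paths from s2 to d1
    intro p hp
    by_contra hcon
    push_neg at hcon
    obtain ⟨hv2p, hv4p⟩ := hcon
    have hd1p : N.d1 ∈ p := Aux.last_mem hp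
    have hs2nP11 : N.s2 ∉ P11 := fun h => hdisj h hs2P22
    obtain ⟨q, z, t, hq, hzt, hTt, htp, hzq, hqT, hqp⟩ :=
      Aux.firstCross (· ∈ P11) p N.s2 N.d1 hp hs2nP11 ⟨N.d1, hd1p, hd1P11⟩
    have hznv3 : z ≠ v3 := by
      intro h
      subst h
      exact hv4p (hv3v4unique t hTt hzt ▸ htp)
    have hzint : InterferesOn N {w | w ∈ P11 ∨ w ∈ P22 ∨ w ∈ q} P11 N.s2 z :=
      ⟨Or.inr (Or.inr hzq), hqT z hzq, ⟨t, hTt, Or.inl hTt, hzt⟩, q, hq,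
        fun w hw => Or.inr (Or.inr hw), hqT⟩
    have hv3int : InterferesOn N {w | w ∈ P11 ∨ w ∈ P22 ∨ w ∈ q} P11 N.s2 v3 :=
      ⟨Or.inr (Or.inl hv3P22), hv3nP11, ⟨v4, hv4P11, Or.inl hv4P11, hv3v4⟩,
        q3, hq3, fun w hw => Or.inr (Or.inl (hq3sub w hw)),
        fun w hw hP => hdisj hP (hq3sub w hw)⟩
    refine hNoMan P11 P22 hP11 hP22 hdisj
      ⟨{w | w ∈ P11 ∨ w ∈ P22 ∨ w ∈ q}, fun w hw => Or.inl hw,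
        fun w hw => Or.inr (Or.inl hw), htwo _ z v3 hzint hv3int hznv3, ?_⟩
    refine key2 _ ?_
    intro h
    simp only [Set.mem_setOf_eq] at h
    rcases h with h | h | h
    · exact hv2nP11 h
    · exact hv2nP22 h
    · exact hv2p (hqp v2 h)
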